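/- Let B ∈ ℚ^{n×n} be invertible. Then there exists an integer K ≥ 1 such that ℤ^n ∩ Bℤ^n[B] = ℤ^n ∩ (Bℤ^n + B²ℤ^n + ⋯ + B^Kℤ^n), where both sides are intersections of additive subgroups of ℚ^n. -/

import Mathlib

open Matrix

/-- `ℤ^n[M] = ⋃_{k≥1} (ℤ^n + Mℤ^n + ⋯ + M^{k-1}ℤ^n)`, the additive subgroup of `ℚ^n`
generated by all vectors `M^j z` with `z ∈ ℤ^n`. -/
def intSpan (n : ℕ) (M : Matrix (Fin n) (Fin n) ℚ) : AddSubgroup (Fin n → ℚ) :=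
  AddSubgroup.closure {x | ∃ (j : ℕ) (z : Fin n → ℤ), x = (M ^ j) *ᵥ fun i => (z i : ℚ)}

/-- `ℤ^n` as an additive subgroup of `ℚ^n`. -/
def intVecs (n : ℕ) : AddSubgroup (Fin n → ℚ) where
  carrier := {x | ∀ i, ∃ m : ℤ, x i = (m : ℚ)}
  zero_mem' := fun i => ⟨0, by simp⟩
  add_mem' := by
    intro a b ha hb i
    obtain ⟨ma, hma⟩ := ha i
    obtain ⟨mb, hmb⟩ := hb i
    exact ⟨ma + mb, by simp [hma, hmb]⟩
  neg_mem' := by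
    intro a ha i
    obtain ⟨ma, hma⟩ := ha i
    exact ⟨-ma, by simp [hma]⟩

/-- The additive subgroup `M^{lo}ℤ^n + M^{lo+1}ℤ^n + ⋯ + M^{hi}ℤ^n` of `ℚ^n`. -/
def powSpan (n : ℕ) (M : Matrix (Fin n) (Fin n) ℚ) (lo hi : ℕ) : AddSubgroup (Fin n → ℚ) :=
  AddSubgroup.closure
    {x | ∃ j, lo ≤ j ∧ j ≤ hi ∧ ∃ z : Fin n → ℤ, x = (M ^ j) *ᵥ fun i => (z i : ℚ)}

lemma powSpan_mono (n : ℕ) (M : Matrix (Fin n) (Fin n) ℚ) {K K' : ℕ} (h : K ≤ K') :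
    powSpan n M 1 K ≤ powSpan n M 1 K' :=
  AddSubgroup.closure_mono (fun _ ⟨j, h1, h2, hz⟩ => ⟨j, h1, h2.trans h, hz⟩)

lemma map_intSpan (n : ℕ) (B : Matrix (Fin n) (Fin n) ℚ) :
    (intSpan n B).map (Matrix.mulVecLin B).toAddMonoidHom = ⨆ K, powSpan n B 1 K := by
  rw [intSpan, AddMonoidHom.map_closure]
  apply le_antisymm
  · rw [AddSubgroup.closure_le]
    rintro x ⟨y, ⟨j, z, rfl⟩, rfl⟩
    apply AddSubgroup.mem_iSup_of_mem (j + 1)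
    apply AddSubgroup.subset_closure
    exact ⟨j + 1, Nat.le_add_left 1 j, le_refl _, z, by
      simp [pow_succ', mulVec_mulVec]⟩
  · refine iSup_le fun K => ?_
    rw [powSpan, AddSubgroup.closure_le]
    rintro x ⟨j, hj1, hjK, z, rfl⟩
    obtain ⟨m, rfl⟩ := Nat.exists_eq_add_of_le hj1
    refine AddSubgroup.subset_closure ⟨(B ^ m) *ᵥ fun i => (z i : ℚ), ⟨m, z, rfl⟩, ?_⟩
    simp [pow_add, pow_one, mulVec_mulVec]

lemma intVecs_fg (n : ℕ) : (AddSubgroup.toIntSubmodule (intVecs n)).FG := by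
  classical
  refine ⟨Finset.univ.image (fun i => Pi.single i (1 : ℚ)), ?_⟩
  apply le_antisymm
  · rw [Submodule.span_le]
    intro x hx
    simp only [Finset.coe_image, Finset.coe_univ, Set.image_univ, Set.mem_range] at hx
    obtain ⟨i, rfl⟩ := hx
    intro j
    exact ⟨if j = i then 1 else 0, by simp [Pi.single_apply]⟩
  · intro x hx
    choose m hm using hx
    have hx : x = ∑ i, (m i : ℤ) • Pi.single i (1 : ℚ) := by
      funext j
      simp only [Finset.sum_apply, Pi.smul_apply, Pi.single_apply, smul_ite, smul_zero]
      rw [Finset.sum_ite_eq Finset.univ j]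
      simp [hm j]
    rw [hx]
    exact Submodule.sum_mem _ fun i _ =>
      Submodule.smul_mem _ _ (Submodule.subset_span (by simp))

theorem stmt5 (n : ℕ) (B : Matrix (Fin n) (Fin n) ℚ) (hB : IsUnit B.det) :
    ∃ K : ℕ, 1 ≤ K ∧
      intVecs n ⊓ (intSpan n B).map (Matrix.mulVecLin B).toAddMonoidHom =
        intVecs n ⊓ powSpan n B 1 K := by
  classical
  set N : Submodule ℤ (Fin n → ℚ) := AddSubgroup.toIntSubmodule (intVecs n) with hN
  haveI : IsNoetherian ℤ N := isNoetherian_of_fg_of_noetherian N (intVecs_fg n)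
  set L : ℕ → Submodule ℤ (Fin n → ℚ) :=
    fun K => AddSubgroup.toIntSubmodule (intVecs n ⊓ powSpan n B 1 K) with hL
  have hLmono : Monotone L := fun K K' h =>
    (AddSubgroup.toIntSubmodule (M := Fin n → ℚ)).monotone
      (inf_le_inf_left _ (powSpan_mono n B h))
  have hLN : ∀ K, L K ≤ N := fun K =>
    (AddSubgroup.toIntSubmodule (M := Fin n → ℚ)).monotone inf_le_left
  obtain ⟨K0, hK0⟩ := monotone_stabilizes_iff_noetherian.mpr (inferInstance : IsNoetherian ℤ N)
    ⟨fun K => (L K).comap N.subtype, fun K K' h => Submodule.comap_mono (hLmono h)⟩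
  have hstab : ∀ m, K0 ≤ m → L K0 = L m := by
    intro m hm
    have := congrArg (Submodule.map N.subtype)
      (show (L K0).comap N.subtype = (L m).comap N.subtype from hK0 m hm)
    simpa [Submodule.map_comap_subtype, inf_eq_right.mpr (hLN K0),
      inf_eq_right.mpr (hLN m)] using this
  have hstab' : ∀ m, K0 ≤ m →
      intVecs n ⊓ powSpan n B 1 K0 = intVecs n ⊓ powSpan n B 1 m := by
    intro m hm
    exact (AddSubgroup.toIntSubmodule (M := Fin n → ℚ)).injective (hstab m hm)
  refine ⟨max K0 1, le_max_right _ _, ?_⟩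
  apply le_antisymm
  · rintro x ⟨hx1, hx2⟩
    rw [map_intSpan] at hx2
    have hdir : Directed (· ≤ ·) (fun K => powSpan n B 1 K) :=
      fun a b => ⟨max a b, powSpan_mono n B (le_max_left a b), powSpan_mono n B (le_max_right a b)⟩
    obtain ⟨K', hK'⟩ := (AddSubgroup.mem_iSup_of_directed hdir).mp hx2
    have h1 : x ∈ intVecs n ⊓ powSpan n B 1 (max K' (max K0 1)) :=
      ⟨hx1, powSpan_mono n B (le_max_left _ _) hK'⟩
    rw [← hstab' _ (le_max_of_le_right (le_max_left _ _)),
      hstab' _ (le_max_left _ _)] at h1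
    exact h1
  · apply inf_le_inf_left
    rw [map_intSpan]
    exact le_iSup (fun K => powSpan n B 1 K) (max K0 1)
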